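/- Suppose the quotient map π : Z → X between compact Hausdorff spaces is a covering map (so fibers are finite). Then a linear map F : C(Z) → C(X) is an onto conditional expectation if and only if there is a continuous ω : Z → [0,1] with Σ_{z ∈ π⁻¹(x)} ω(z) = 1 for all x and F(b)(x) = Σ_{z ∈ π⁻¹(x)} ω(z) b(z); such ω is unique, and F is faithful iff ω⁻¹(0) is nowhere dense in Z. -/

import Mathlib

open Set Function

set_option linter.unusedSectionVars false
set_option linter.unusedVariables false
set_option maxHeartbeats 1000000

section CondExpAux

variable {Z X : Type*} [TopologicalSpace Z] [CompactSpace Z] [T2Space Z]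
  [TopologicalSpace X] [CompactSpace X] [T2Space X]

theorem CondExpAux.fiber_finite' {π : Z → X} (hcov : IsCoveringMap π) (x : X) :
    (π ⁻¹' {x}).Finite := by
  have : DiscreteTopology ↥(π ⁻¹' {x}) := (hcov x).1
  exact ((isClosed_singleton.preimage hcov.continuous).isCompact).finite (isDiscrete_iff_discreteTopology.mpr this)





def IsBump (π : Z → X) (z : Z) (b : C(Z, ℝ)) : Prop :=
  (∀ w, b w ∈ Icc (0:ℝ) 1) ∧
  (∃ U, IsOpen U ∧ z ∈ U ∧ EqOn (⇑b) 1 U) ∧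
  (∃ V, IsOpen V ∧ π ⁻¹' {π z} \ {z} ⊆ V ∧ EqOn (⇑b) 0 V)

theorem bump_forall {π : Z → X} (hcov : IsCoveringMap π) (z₀ : Z) :
    ∃ (b : C(Z, ℝ)) (N : Set Z), IsOpen N ∧ z₀ ∈ N ∧ ∀ z' ∈ N, IsBump π z' b := by
  set x₀ := π z₀ with hx₀def
  have hd : DiscreteTopology ↥(π ⁻¹' {x₀}) := (hcov x₀).1
  haveI : Nonempty ↥(π ⁻¹' {x₀}) := ⟨⟨z₀, rfl⟩⟩
  set e := (hcov x₀).toTrivialization with hedef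
  have hx₀ : x₀ ∈ e.baseSet := (hcov x₀).mem_toTrivialization_baseSet
  have hz₀s : z₀ ∈ e.source := e.mem_source.mpr hx₀
  set i₀ := (e z₀).2 with hi₀def
  set S : Set Z := e.source ∩ e ⁻¹' (Set.univ ×ˢ {i₀}) with hSdef
  set T : Set Z := e.source ∩ e ⁻¹' (Set.univ ×ˢ ({i₀}ᶜ)) with hTdef
  have hSopen : IsOpen S :=
    e.toOpenPartialHomeomorph.isOpen_inter_preimage (isOpen_univ.prod (isOpen_discrete _))
  have hTopen : IsOpen T :=
    e.toOpenPartialHomeomorph.isOpen_inter_preimage (isOpen_univ.prod (isOpen_discrete _))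
  have hST : Disjoint S T := by
    rw [Set.disjoint_left]
    rintro w ⟨hw1, hw2⟩ ⟨hw1', hw2'⟩
    exact hw2'.2 hw2.2
  -- membership criteria
  have hmemS : ∀ w, w ∈ S ↔ w ∈ e.source ∧ (e w).2 = i₀ := by
    intro w; constructor
    · rintro ⟨h1, h2⟩; exact ⟨h1, h2.2⟩
    · rintro ⟨h1, h2⟩; exact ⟨h1, ⟨trivial, h2⟩⟩
  have hz₀S : z₀ ∈ S := (hmemS z₀).mpr ⟨hz₀s, rfl⟩
  -- shrink the base set
  obtain ⟨U', hU'open, hxU', hclosU'⟩ :=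
    normal_exists_closure_subset (isClosed_singleton (x := x₀)) e.open_baseSet
      (Set.singleton_subset_iff.mpr hx₀)
  have hxU'' : x₀ ∈ U' := hxU' rfl
  set K : Set Z := S ∩ π ⁻¹' (closure U') with hKdef
  have hKS : K ⊆ S := Set.inter_subset_left
  have hKclosed : IsClosed K := by
    rw [← isOpen_compl_iff, isOpen_iff_mem_nhds]
    intro w hw
    by_cases hw1 : w ∈ π ⁻¹' (closure U')
    · -- then w ∈ e.source, and w ∉ S, so w ∈ T
      have hws : w ∈ e.source := e.mem_source.mpr (hclosU' hw1)
      have hwT : w ∈ T := by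
        rcases eq_or_ne ((e w).2) i₀ with h | h
        · exact absurd ⟨(hmemS w).mpr ⟨hws, h⟩, hw1⟩ hw
        · exact ⟨hws, ⟨trivial, h⟩⟩
      exact Filter.mem_of_superset (hTopen.mem_nhds hwT)
        (fun u hu => fun hc => (Set.disjoint_left.mp hST (hKS hc)) hu)
    · exact Filter.mem_of_superset
        (((isClosed_closure.preimage hcov.continuous).isOpen_compl).mem_nhds hw1)
        (fun u hu => fun hc => hu hc.2)
  have hKcomp : Disjoint Sᶜ K := by
    rw [Set.disjoint_left]; intro w hw hwK; exact hw (hKS hwK)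
  obtain ⟨b, hb0, hb1, hbIcc⟩ :=
    exists_continuous_zero_one_of_isClosed hSopen.isClosed_compl hKclosed hKcomp
  set N : Set Z := S ∩ π ⁻¹' U' with hNdef
  refine ⟨b, N, hSopen.inter (hU'open.preimage hcov.continuous), ⟨hz₀S, hxU''⟩, ?_⟩
  intro z' hz'
  have hNK : N ⊆ K := Set.inter_subset_inter_right _ (Set.preimage_mono subset_closure)
  refine ⟨hbIcc, ⟨N, hSopen.inter (hU'open.preimage hcov.continuous), hz', fun u hu => hb1 (hNK hu)⟩, ?_⟩
  refine ⟨T, hTopen, ?_, fun u hu => hb0 (fun hus => Set.disjoint_left.mp hST hus hu)⟩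
  rintro w ⟨hwf, hwne⟩
  have hπw : π w = π z' := hwf
  have hws : w ∈ e.source := e.mem_source.mpr (by rw [hπw]; exact hclosU' (subset_closure hz'.2))
  rcases eq_or_ne ((e w).2) i₀ with h | h
  · exfalso
    have hz'S : z' ∈ S := hz'.1
    have hz'src : z' ∈ e.source := hz'S.1
    have h2 : (e z').2 = i₀ := ((hmemS z').mp hz'S).2
    have : e w = e z' := by
      rw [← e.mk_proj_snd hws, ← e.mk_proj_snd hz'src, hπw, h, h2]
    exact hwne (e.toPartialHomeomorph.injOn hws hz'src this)
  · exact ⟨hws, ⟨trivial, h⟩⟩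



theorem F_loc' {π : Z → X} (hcont : Continuous π)
    (F : C(Z, ℝ) →ₗ[ℝ] C(X, ℝ))
    (hmod : ∀ (a : C(X, ℝ)) (b : C(Z, ℝ)), F ((a.comp ⟨π, hcont⟩) * b) = a * F b)
    {g : C(Z, ℝ)} {x : X} {V : Set Z} (hV : IsOpen V) (hfib : π ⁻¹' {x} ⊆ V)
    (hg : EqOn (⇑g) 0 V) : F g x = 0 := by
  have hC : IsClosed (π '' Vᶜ) :=
    (hV.isClosed_compl.isCompact.image hcont).isClosed
  have hxC : x ∉ π '' Vᶜ := by
    rintro ⟨w, hw, rfl⟩; exact hw (hfib rfl)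
  obtain ⟨a, ha0, ha1, haIcc⟩ :=
    exists_continuous_zero_one_of_isClosed hC isClosed_singleton
      (Set.disjoint_left.mpr (fun u hu (h : u = x) => hxC (h ▸ hu)))
  have key : (a.comp ⟨π, hcont⟩) * g = 0 := by
    ext w
    by_cases hw : w ∈ V
    · simp [hg hw]
    · simp [ha0 ⟨w, hw, rfl⟩]
  have := hmod a g
  rw [key, map_zero] at this
  have := congrArg (fun f : C(X, ℝ) => f x) this.symm
  simpa [ha1 rfl] using this



theorem F_const {π : Z → X} (hcont : Continuous π)
    (F : C(Z, ℝ) →ₗ[ℝ] C(X, ℝ))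
    (hunit : ∀ a : C(X, ℝ), F (a.comp ⟨π, hcont⟩) = a) (c : ℝ) :
    F (ContinuousMap.const Z c) = ContinuousMap.const X c := by
  have : (ContinuousMap.const X c).comp (⟨π, hcont⟩ : C(Z, X)) = ContinuousMap.const Z c := by
    ext w; simp
  rw [← this, hunit]

theorem F_fiber_vanish {π : Z → X} (hcov : IsCoveringMap π)
    (F : C(Z, ℝ) →ₗ[ℝ] C(X, ℝ))
    (hpos : ∀ b : C(Z, ℝ), 0 ≤ b → 0 ≤ F b)
    (hunit : ∀ a : C(X, ℝ), F (a.comp ⟨π, hcov.continuous⟩) = a)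
    (hmod : ∀ (a : C(X, ℝ)) (b : C(Z, ℝ)), F ((a.comp ⟨π, hcov.continuous⟩) * b) = a * F b)
    {g : C(Z, ℝ)} {x : X} (hg : ∀ w ∈ π ⁻¹' {x}, g w = 0) : F g x = 0 := by
  have key : ∀ ε : ℝ, 0 < ε → F g x ≤ ε ∧ -(F g x) ≤ ε := by
    intro ε hε
    set K : Set Z := (fun w => |g w|) ⁻¹' (Ici ε) with hKdef
    have hKclosed : IsClosed K := isClosed_Ici.preimage (g.continuous.abs)
    have hfibK : π ⁻¹' {x} ⊆ Kᶜ := by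
      intro w hw hK
      rw [Set.mem_preimage, hg w hw] at hK
      simp at hK; linarith
    obtain ⟨V, hVopen, hfibV, hclosV⟩ :=
      normal_exists_closure_subset (isClosed_singleton.preimage hcov.continuous)
        hKclosed.isOpen_compl hfibK
    obtain ⟨c, hc0, hc1, hcIcc⟩ :=
      exists_continuous_zero_one_of_isClosed isClosed_closure hKclosed
        (Set.disjoint_left.mpr (fun u hu huK => hclosV hu huK))
    have hFc : F c x = 0 :=
      F_loc' hcov.continuous F hmod hVopen hfibV (fun u hu => hc0 (subset_closure hu))
    have hptwise : ∀ w, |g w| ≤ ε + ‖g‖ * c w := by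
      intro w
      by_cases hw : w ∈ K
      · have : c w = 1 := hc1 hw
        rw [this, mul_one]
        have h6 := g.norm_coe_le_norm w
        rw [Real.norm_eq_abs] at h6
        linarith [abs_nonneg (g w)]
      · have h1 : |g w| < ε := by
          rw [hKdef, Set.mem_preimage, Set.mem_Ici, not_le] at hw; exact hw
        have h2 : 0 ≤ ‖g‖ * c w := mul_nonneg (norm_nonneg g) (hcIcc w).1
        linarith
    -- two positivity applications
    have haux : ∀ s : ℝ, (s = 1 ∨ s = -1) →
        F (s • g) x ≤ ε := by
      intro s hs
      have h0 : (0 : C(Z, ℝ)) ≤ ContinuousMap.const Z ε + ‖g‖ • c - s • g := by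
        rw [ContinuousMap.le_def]
        intro w
        have h3 : |s * g w| = |g w| := by rcases hs with h | h <;> simp [h, abs_mul]
        have := hptwise w
        simp only [ContinuousMap.zero_apply, ContinuousMap.sub_apply, ContinuousMap.add_apply,
          ContinuousMap.const_apply, ContinuousMap.smul_apply, smul_eq_mul]
        have h5 : s * g w ≤ |g w| := by
          calc s * g w ≤ |s * g w| := le_abs_self _
          _ = |g w| := h3
        linarith
      have := hpos _ h0
      rw [map_sub, map_add, map_smul, F_const hcov.continuous F hunit, map_smul] at this
      have := ContinuousMap.le_def.mp this x
      simpa [hFc] using this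
    constructor
    · have := haux 1 (Or.inl rfl)
      rw [one_smul] at this; exact this
    · have := haux (-1) (Or.inr rfl)
      rw [neg_smul, one_smul, map_neg] at this
      simpa using this
  have h1 : F g x ≤ 0 := le_of_forall_pos_le_add (fun ε hε => by simpa using (key ε hε).1)
  have h2 : 0 ≤ F g x := by
    have := fun ε (hε : (0:ℝ) < ε) => (key ε hε).2
    have : -(F g x) ≤ 0 := le_of_forall_pos_le_add (fun ε hε => by simpa using (key ε hε).2)
    linarith
  linarith






theorem F_bump_eq {π : Z → X} (hcov : IsCoveringMap π)
    (F : C(Z, ℝ) →ₗ[ℝ] C(X, ℝ))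
    (hmod : ∀ (a : C(X, ℝ)) (b : C(Z, ℝ)), F ((a.comp ⟨π, hcov.continuous⟩) * b) = a * F b)
    {z : Z} {b b' : C(Z, ℝ)} (hb : IsBump π z b) (hb' : IsBump π z b') :
    F b (π z) = F b' (π z) := by
  obtain ⟨_, ⟨U, hUo, hzU, hU1⟩, ⟨V, hVo, hVf, hV0⟩⟩ := hb
  obtain ⟨_, ⟨U', hU'o, hzU', hU'1⟩, ⟨V', hV'o, hV'f, hV'0⟩⟩ := hb'
  have h0 : F (b - b') (π z) = 0 := by
    apply F_loc' hcov.continuous F hmod ((hUo.inter hU'o).union (hVo.inter hV'o))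
    · intro w hw
      rcases eq_or_ne w z with rfl | hne
      · exact Or.inl ⟨hzU, hzU'⟩
      · exact Or.inr ⟨hVf ⟨hw, hne⟩, hV'f ⟨hw, hne⟩⟩
    · rintro w (⟨h1, h2⟩ | ⟨h1, h2⟩)
      · show (b - b') w = 0
        simp [ContinuousMap.sub_apply, hU1 h1, hU'1 h2]
      · show (b - b') w = 0
        simp [ContinuousMap.sub_apply, hV0 h1, hV'0 h2]
  rw [map_sub] at h0
  simp only [ContinuousMap.sub_apply] at h0
  linarith [h0]

theorem forward_exists {π : Z → X} (hcov : IsCoveringMap π)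
    (F : C(Z, ℝ) →ₗ[ℝ] C(X, ℝ))
    (hpos : ∀ b : C(Z, ℝ), 0 ≤ b → 0 ≤ F b)
    (hunit : ∀ a : C(X, ℝ), F (a.comp ⟨π, hcov.continuous⟩) = a)
    (hmod : ∀ (a : C(X, ℝ)) (b : C(Z, ℝ)), F ((a.comp ⟨π, hcov.continuous⟩) * b) = a * F b) :
    ∃ ω : Z → ℝ, Continuous ω ∧ (∀ z : Z, ω z ∈ Set.Icc (0 : ℝ) 1) ∧
      (∀ x : X, ∑ᶠ z ∈ π ⁻¹' {x}, ω z = 1) ∧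
      (∀ (b : C(Z, ℝ)) (x : X), F b x = ∑ᶠ z ∈ π ⁻¹' {x}, ω z * b z) := by
  choose β N hNo hzN hbump using bump_forall hcov
  set ω : Z → ℝ := fun z => F (β z) (π z) with hωdef
  have hbz : ∀ z, IsBump π z (β z) := fun z => hbump z z (hzN z)
  have hspec : ∀ (z : Z) (b : C(Z, ℝ)), IsBump π z b → ω z = F b (π z) :=
    fun z b hb => F_bump_eq hcov F hmod (hbz z) hb
  have hF1 : F 1 = 1 := by
    have := hunit 1
    rwa [ContinuousMap.one_comp] at this
  -- representation
  have hrepr : ∀ (b : C(Z, ℝ)) (x : X), F b x = ∑ᶠ z ∈ π ⁻¹' {x}, ω z * b z := by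
    classical
    intro b x
    have hs := CondExpAux.fiber_finite' hcov x
    set t := hs.toFinset with htdef
    have hmem : ∀ z, z ∈ t ↔ π z = x := by
      intro z; rw [htdef, Set.Finite.mem_toFinset]; rfl
    have hβδ : ∀ z ∈ t, ∀ w ∈ t, β z w = if z = w then 1 else 0 := by
      intro z hz w hw
      rcases eq_or_ne z w with rfl | hne
      · obtain ⟨_, ⟨U, hUo, hzU, hU1⟩, _⟩ := hbz z
        simp [hU1 hzU]
      · obtain ⟨_, _, ⟨V, hVo, hVf, hV0⟩⟩ := hbz z
        have hwv : w ∈ V := hVf ⟨by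
          rw [Set.mem_preimage, Set.mem_singleton_iff, (hmem w).mp hw, (hmem z).mp hz], hne.symm⟩
        simp [hne, hV0 hwv]
    set g : C(Z, ℝ) := b - ∑ z ∈ t, b z • β z with hgdef
    have hgfib : ∀ w ∈ π ⁻¹' {x}, g w = 0 := by
      intro w hw
      have hwt : w ∈ t := (hmem w).mpr hw
      have : (∑ z ∈ t, b z • β z) w = b w := by
        rw [ContinuousMap.coe_sum, Finset.sum_apply]
        rw [Finset.sum_eq_single_of_mem w hwt]
        · simp [hβδ w hwt w hwt]
        · intro z hz hne
          simp [hβδ z hz w hwt, hne]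
      simp [hgdef, this]
    have h0 : F g x = 0 := F_fiber_vanish hcov F hpos hunit hmod hgfib
    rw [hgdef, map_sub, map_sum] at h0
    simp only [map_smul] at h0
    have h1 : F b x = ∑ z ∈ t, b z * (F (β z)) x := by
      simp only [ContinuousMap.sub_apply, ContinuousMap.coe_sum, Finset.sum_apply,
        ContinuousMap.smul_apply, smul_eq_mul] at h0
      linarith [h0]
    rw [finsum_mem_eq_finite_toFinset_sum _ hs, ← htdef]
    rw [h1]
    refine Finset.sum_congr rfl (fun z hz => ?_)
    have : F (β z) x = ω z := by
      show _ = (F (β z)) (π z)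
      rw [(hmem z).mp hz]
    rw [this, mul_comm]
  have hIcc : ∀ z, ω z ∈ Set.Icc (0:ℝ) 1 := by
    intro z
    obtain ⟨hicc, _, _⟩ := hbz z
    constructor
    · have := hpos (β z) (by rw [ContinuousMap.le_def]; intro w; simpa using (hicc w).1)
      exact ContinuousMap.le_def.mp this (π z)
    · have h0 : (0 : C(Z,ℝ)) ≤ 1 - β z := by
        rw [ContinuousMap.le_def]; intro w
        simp only [ContinuousMap.zero_apply, ContinuousMap.sub_apply, ContinuousMap.one_apply]
        linarith [(hicc w).2]
      have := hpos _ h0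
      rw [map_sub, hF1] at this
      have := ContinuousMap.le_def.mp this (π z)
      simp only [ContinuousMap.zero_apply, ContinuousMap.sub_apply, ContinuousMap.one_apply] at this
      rw [hωdef]; linarith
  refine ⟨ω, ?_, hIcc, ?_, hrepr⟩
  · rw [continuous_iff_continuousAt]
    intro z₀
    have heq : ∀ z' ∈ N z₀, ω z' = (F (β z₀)) (π z') :=
      fun z' h => hspec z' (β z₀) (hbump z₀ z' h)
    have hc : ContinuousAt ((F (β z₀)) ∘ π) z₀ :=
      ((F (β z₀)).continuous.comp hcov.continuous).continuousAt
    exact hc.congr (Filter.eventuallyEq_of_mem ((hNo z₀).mem_nhds (hzN z₀)) heq).symm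
  · intro x
    have := hrepr 1 x
    rw [hF1] at this
    simp only [ContinuousMap.one_apply, mul_one] at this
    exact this.symm



-- backward: a cocycle representation gives a conditional expectation
theorem backward_dir {π : Z → X} (hcov : IsCoveringMap π) (hπ : Function.Surjective π)
    (F : C(Z, ℝ) →ₗ[ℝ] C(X, ℝ)) {ω : Z → ℝ}
    (hIcc : ∀ z : Z, ω z ∈ Set.Icc (0 : ℝ) 1)
    (hsum : ∀ x : X, ∑ᶠ z ∈ π ⁻¹' {x}, ω z = 1)
    (hrep : ∀ (b : C(Z, ℝ)) (x : X), F b x = ∑ᶠ z ∈ π ⁻¹' {x}, ω z * b z) :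
    (∀ b : C(Z, ℝ), 0 ≤ b → 0 ≤ F b) ∧
    (∀ a : C(X, ℝ), F (a.comp ⟨π, hcov.continuous⟩) = a) ∧
    (∀ (a : C(X, ℝ)) (b : C(Z, ℝ)), F (a.comp ⟨π, hcov.continuous⟩ * b) = a * F b) := by
  have hfin := CondExpAux.fiber_finite' hcov
  have key : ∀ (b : C(Z, ℝ)) (x : X), F b x = ∑ z ∈ (hfin x).toFinset, ω z * b z := by
    intro b x
    rw [hrep b x, finsum_mem_eq_finite_toFinset_sum _ (hfin x)]
  have hmem : ∀ (x : X) (z : Z), z ∈ (hfin x).toFinset ↔ π z = x := by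
    intro x z; rw [Set.Finite.mem_toFinset]; rfl
  have hsum' : ∀ x : X, ∑ z ∈ (hfin x).toFinset, ω z = 1 := by
    intro x; rw [← finsum_mem_eq_finite_toFinset_sum _ (hfin x)]; exact hsum x
  refine ⟨?_, ?_, ?_⟩
  · intro b hb
    rw [ContinuousMap.le_def]
    intro x
    rw [ContinuousMap.zero_apply, key b x]
    exact Finset.sum_nonneg fun z _ =>
      mul_nonneg (hIcc z).1 (by simpa using ContinuousMap.le_def.mp hb z)
  · intro a
    ext x
    rw [key]
    have : ∀ z ∈ (hfin x).toFinset, ω z * (a.comp ⟨π, hcov.continuous⟩) z = ω z * a x := by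
      intro z hz
      simp only [ContinuousMap.comp_apply, ContinuousMap.coe_mk]
      rw [(hmem x z).mp hz]
    rw [Finset.sum_congr rfl this, ← Finset.sum_mul, hsum' x, one_mul]
  · intro a b
    ext x
    rw [ContinuousMap.mul_apply, key, key]
    have : ∀ z ∈ (hfin x).toFinset,
        ω z * ((a.comp ⟨π, hcov.continuous⟩) * b) z = a x * (ω z * b z) := by
      intro z hz
      simp only [ContinuousMap.mul_apply, ContinuousMap.comp_apply, ContinuousMap.coe_mk]
      rw [(hmem x z).mp hz]; ring
    rw [Finset.sum_congr rfl this, ← Finset.mul_sum]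

-- uniqueness
theorem unique_dir {π : Z → X} (hcov : IsCoveringMap π)
    (F : C(Z, ℝ) →ₗ[ℝ] C(X, ℝ)) (ω ω' : Z → ℝ)
    (hrep : ∀ (b : C(Z, ℝ)) (x : X), F b x = ∑ᶠ z ∈ π ⁻¹' {x}, ω z * b z)
    (hrep' : ∀ (b : C(Z, ℝ)) (x : X), F b x = ∑ᶠ z ∈ π ⁻¹' {x}, ω' z * b z) :
    ω = ω' := by
  have hfin := CondExpAux.fiber_finite' hcov
  funext z
  have hzfib : z ∈ π ⁻¹' {π z} := rfl
  have hclosed : IsClosed (π ⁻¹' {π z} \ {z}) :=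
    ((hfin (π z)).subset Set.diff_subset).isClosed
  obtain ⟨b, hb0, hb1, hbIcc⟩ :=
    exists_continuous_zero_one_of_isClosed hclosed isClosed_singleton
      (Set.disjoint_left.mpr (fun u hu (h : u = z) => hu.2 h))
  have hval : ∀ (ν : Z → ℝ), ∑ᶠ w ∈ π ⁻¹' {π z}, ν w * b w = ν z := by
    intro ν
    rw [finsum_mem_eq_finite_toFinset_sum _ (hfin (π z))]
    rw [Finset.sum_eq_single_of_mem z (by rw [Set.Finite.mem_toFinset]; exact hzfib)]
    · have h1 : b z = 1 := by simpa using hb1 rfl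
      rw [h1, mul_one]
    · intro w hw hne
      rw [Set.Finite.mem_toFinset] at hw
      have h0 : b w = 0 := by simpa using hb0 ⟨hw, hne⟩
      rw [h0, mul_zero]
  have h1 := (hrep b (π z)).symm.trans (hrep' b (π z))
  rw [hval ω, hval ω'] at h1
  exact h1

-- faithfulness
theorem faithful_dir {π : Z → X} (hcov : IsCoveringMap π) (hπ : Function.Surjective π)
    (F : C(Z, ℝ) →ₗ[ℝ] C(X, ℝ)) (ω : Z → ℝ) (hω : Continuous ω)
    (hIcc : ∀ z : Z, ω z ∈ Set.Icc (0 : ℝ) 1)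
    (hrep : ∀ (b : C(Z, ℝ)) (x : X), F b x = ∑ᶠ z ∈ π ⁻¹' {x}, ω z * b z) :
    (∀ b : C(Z, ℝ), F (b * b) = 0 → b = 0) ↔ IsNowhereDense (ω ⁻¹' {0}) := by
  have hfin := CondExpAux.fiber_finite' hcov
  have hcl : IsClosed (ω ⁻¹' {0}) := isClosed_singleton.preimage hω
  have key : ∀ (b : C(Z, ℝ)) (x : X), F b x = ∑ z ∈ (hfin x).toFinset, ω z * b z := by
    intro b x
    rw [hrep b x, finsum_mem_eq_finite_toFinset_sum _ (hfin x)]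
  constructor
  · -- faithful → nowhere dense
    intro hfaith
    by_contra hnd
    rw [hcl.isNowhereDense_iff] at hnd
    obtain ⟨z, hz⟩ := Set.nonempty_iff_ne_empty.mpr hnd
    obtain ⟨b, hb0, hb1, hbIcc⟩ :=
      exists_continuous_zero_one_of_isClosed isOpen_interior.isClosed_compl
        (isClosed_singleton (x := z))
        (Set.disjoint_left.mpr (fun u hu (h : u = z) => hu (h ▸ hz)))
    have hFbb : F (b * b) = 0 := by
      ext x
      rw [key, ContinuousMap.zero_apply]
      refine Finset.sum_eq_zero fun w hw => ?_
      by_cases hwi : w ∈ interior (ω ⁻¹' {0})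
      · have hmem : w ∈ ω ⁻¹' {0} := interior_subset hwi
        rw [Set.mem_preimage, Set.mem_singleton_iff] at hmem
        rw [hmem, zero_mul]
      · have hbw : b w = 0 := by simpa using hb0 hwi
        rw [ContinuousMap.mul_apply, hbw, mul_zero, mul_zero]
    have := hfaith b hFbb
    have hb1' : b z = 1 := hb1 rfl
    rw [this] at hb1'
    simp at hb1'
  · -- nowhere dense → faithful
    intro hnd b hb
    have hzero : ∀ w, w ∉ ω ⁻¹' {0} → b w = 0 := by
      intro w hw
      have hx := congrArg (fun f : C(X, ℝ) => f (π w)) hb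
      simp only [ContinuousMap.zero_apply] at hx
      rw [key] at hx
      have hterms : ∀ u ∈ (hfin (π w)).toFinset, 0 ≤ ω u * (b * b) u := by
        intro u _
        rw [ContinuousMap.mul_apply]
        exact mul_nonneg (hIcc u).1 (mul_self_nonneg _)
      have hwmem : w ∈ (hfin (π w)).toFinset := by
        rw [Set.Finite.mem_toFinset]; exact rfl
      have := (Finset.sum_eq_zero_iff_of_nonneg hterms).mp hx w hwmem
      rw [ContinuousMap.mul_apply] at this
      rcases mul_eq_zero.mp this with h | h
      · exact absurd h hw
      · exact mul_self_eq_zero.mp h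
    have hdense : Dense ((ω ⁻¹' {0})ᶜ) := by
      rw [hcl.isNowhereDense_iff] at hnd
      exact interior_eq_empty_iff_dense_compl.mp hnd
    have : (⇑b) = (⇑(0 : C(Z, ℝ))) :=
      Continuous.ext_on hdense b.continuous (map_continuous 0) (fun w hw => by
        simp [hzero w hw])
    ext w
    simpa using congrFun this w

end CondExpAux

/-- Suppose the quotient map `π : Z → X` between compact Hausdorff spaces is a covering
map.  A linear map `F : C(Z) → C(X)` is an onto conditional expectation iff there is a
continuous `ω : Z → [0,1]` with `Σ_{z ∈ π⁻¹(x)} ω(z) = 1` and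
`F(b)(x) = Σ_{z ∈ π⁻¹(x)} ω(z) b(z)`; such `ω` is unique, and `F` is faithful iff
`ω⁻¹(0)` is nowhere dense in `Z`. -/
theorem condexp_iff_cocycle_of_covering
    (Z : Type*) [TopologicalSpace Z] [CompactSpace Z] [T2Space Z]
    (X : Type*) [TopologicalSpace X] [CompactSpace X] [T2Space X]
    (π : Z → X) (hcov : IsCoveringMap π) (hπ : Function.Surjective π)
    (hquot : ∀ z z' : Z, π z = π z' ↔ ∀ a : C(X, ℝ), a (π z) = a (π z'))
    (F : C(Z, ℝ) →ₗ[ℝ] C(X, ℝ)) :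
    -- `F` is an onto conditional expectation iff it is given by a continuous cocycle `ω`:
    (((∀ b : C(Z, ℝ), 0 ≤ b → 0 ≤ F b) ∧
      (∀ a : C(X, ℝ), F (a.comp ⟨π, hcov.continuous⟩) = a) ∧
      (∀ (a : C(X, ℝ)) (b : C(Z, ℝ)), F (a.comp ⟨π, hcov.continuous⟩ * b) = a * F b)) ↔
      (∃ ω : Z → ℝ, Continuous ω ∧ (∀ z : Z, ω z ∈ Set.Icc (0 : ℝ) 1) ∧
        (∀ x : X, ∑ᶠ z ∈ π ⁻¹' {x}, ω z = 1) ∧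
        (∀ (b : C(Z, ℝ)) (x : X), F b x = ∑ᶠ z ∈ π ⁻¹' {x}, ω z * b z))) ∧
    -- the cocycle `ω` is unique:
    (∀ ω ω' : Z → ℝ,
      (Continuous ω ∧ (∀ z : Z, ω z ∈ Set.Icc (0 : ℝ) 1) ∧
        (∀ x : X, ∑ᶠ z ∈ π ⁻¹' {x}, ω z = 1) ∧
        (∀ (b : C(Z, ℝ)) (x : X), F b x = ∑ᶠ z ∈ π ⁻¹' {x}, ω z * b z)) →
      (Continuous ω' ∧ (∀ z : Z, ω' z ∈ Set.Icc (0 : ℝ) 1) ∧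
        (∀ x : X, ∑ᶠ z ∈ π ⁻¹' {x}, ω' z = 1) ∧
        (∀ (b : C(Z, ℝ)) (x : X), F b x = ∑ᶠ z ∈ π ⁻¹' {x}, ω' z * b z)) →
      ω = ω') ∧
    -- `F` is faithful iff `ω⁻¹(0)` is nowhere dense:
    (∀ ω : Z → ℝ,
      (Continuous ω ∧ (∀ z : Z, ω z ∈ Set.Icc (0 : ℝ) 1) ∧
        (∀ x : X, ∑ᶠ z ∈ π ⁻¹' {x}, ω z = 1) ∧
        (∀ (b : C(Z, ℝ)) (x : X), F b x = ∑ᶠ z ∈ π ⁻¹' {x}, ω z * b z)) →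
      ((∀ b : C(Z, ℝ), F (b * b) = 0 → b = 0) ↔ IsNowhereDense (ω ⁻¹' {0}))) := by
  refine ⟨?_, ?_, ?_⟩
  · constructor
    · rintro ⟨hpos, hunit, hmod⟩
      exact forward_exists hcov F hpos hunit hmod
    · rintro ⟨ω, hc, hIcc, hsum, hrep⟩
      exact backward_dir hcov hπ F hIcc hsum hrep
  · rintro ω ω' ⟨_, _, _, hrep⟩ ⟨_, _, _, hrep'⟩
    exact unique_dir hcov F ω ω' hrep hrep'
  · rintro ω ⟨hc, hIcc, _, hrep⟩
    exact faithful_dir hcov hπ F ω hc hIcc hrep
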